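/- Let A = [[A_ff, A_fc],[A_cf, A_cc]] with A_ff invertible, let P = [[W],[I]] and R = [Z, I], let K = R·A·P, and let K_A = A_cc − A_cf·A_ff⁻¹·A_fc be the Schur complement. With δ_P = A_ff·W + A_fc and δ_R = Z·A_ff + A_cf, one has K − K_A = δ_R·A_ff⁻¹·δ_P. -/

import Mathlib

open Matrix

/-- The difference between the coarse-grid operator `K = R·A·P` and the Schur complement
`K_A = A_cc − A_cf·A_ff⁻¹·A_fc` is `K − K_A = δ_R·A_ff⁻¹·δ_P`. -/
theorem coarse_operator_sub_schur_complement
    {F C : Type*} [Fintype F] [Fintype C] [DecidableEq F] [DecidableEq C]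
    (Aff : Matrix F F ℝ) (Afc : Matrix F C ℝ) (Acf : Matrix C F ℝ) (Acc : Matrix C C ℝ)
    (hAff : IsUnit Aff)
    (W : Matrix F C ℝ) (Z : Matrix C F ℝ)
    (A : Matrix (F ⊕ C) (F ⊕ C) ℝ) (hA : A = fromBlocks Aff Afc Acf Acc)
    (P : Matrix (F ⊕ C) C ℝ) (hP : P = fromRows W 1)
    (R : Matrix C (F ⊕ C) ℝ) (hR : R = fromCols Z 1)
    (K : Matrix C C ℝ) (hK : K = R * A * P)
    (KA : Matrix C C ℝ) (hKA : KA = Acc - Acf * Aff⁻¹ * Afc)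
    (δP : Matrix F C ℝ) (hδP : δP = Aff * W + Afc)
    (δR : Matrix C F ℝ) (hδR : δR = Z * Aff + Acf) :
    K - KA = δR * Aff⁻¹ * δP := by
  have hd := (isUnit_iff_isUnit_det Aff).mp hAff
  have hinv : Aff⁻¹ * Aff = 1 := nonsing_inv_mul _ hd
  have hinv' : Aff * Aff⁻¹ = 1 := mul_nonsing_inv _ hd
  subst hA hP hR hK hKA hδP hδR
  rw [Matrix.mul_assoc, fromBlocks_mul_fromRows, fromCols_mul_fromRows]
  have h2 : Acf * Aff⁻¹ * Aff = Acf := by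
    rw [Matrix.mul_assoc, hinv, Matrix.mul_one]
  have h3 : Z * Aff * Aff⁻¹ = Z := by
    rw [Matrix.mul_assoc, hinv', Matrix.mul_one]
  have h4 : Aff⁻¹ * (Aff * W) = W := by
    rw [← Matrix.mul_assoc, hinv, Matrix.one_mul]
  simp only [Matrix.one_mul, Matrix.mul_one, Matrix.mul_add, Matrix.add_mul,
    h3, Matrix.mul_assoc Acf Aff⁻¹, ← Matrix.mul_assoc Acf Aff⁻¹ Aff, h2, h4]
  abel
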